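/- Let U be a finite family of relations on a set 𝕏 such that each u ∈ U is a partial order on its reflexive support X(u) = {y | (y,y) ∈ u}, all u share a common least element x⊥, and for any u₁, u₂ ∈ U, u₁ ∩ u₂ restricted to X(u₁) ∩ X(u₂) agrees with both. Then (⋃U restricted to being a relation on X(⋃U), together with X(⋃U)) need not in general be transitive; but if additionally every u ∈ U is downward-closed in the union (i.e., u = (⋃U)|_{X(u)} and X(u) is a lower set of the union order), then ⋃U is a partial order on X(⋃U) with least element x⊥. -/
import Mathlib


/-- The reflexive support `X(u) = {y | (y,y) ∈ u}` of a relation `u`. -/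
def Xr {α : Type*} (u : Set (α × α)) : Set α := {y | (y, y) ∈ u}

/-- Let `U` be a finite family of relations on `α` (`(a,b) ∈ u` meaning
`a ≥ b`), each a partial order on its reflexive support `X(u)`, all sharing a
common least element `x⊥`, and pairwise compatible.  If additionally every
`u ∈ U` is the restriction of `⋃U` to `X(u)` and `X(u)` is a lower set of the
union order, then `⋃U` is a partial order on `X(⋃U)` with least element `x⊥`. -/
theorem union_of_compatible_bounded_subposets
    {α : Type*} (U : Set (Set (α × α))) (xbot : α)
    (hfin : U.Finite) (hUne : U.Nonempty)
    -- each `u` is a partial order on its reflexive support `X(u)`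
    (hdom : ∀ u ∈ U, ∀ p ∈ u, p.1 ∈ Xr u ∧ p.2 ∈ Xr u)
    (htrans : ∀ u ∈ U, ∀ a b c, (a, b) ∈ u → (b, c) ∈ u → (a, c) ∈ u)
    (hantisymm : ∀ u ∈ U, ∀ a b, (a, b) ∈ u → (b, a) ∈ u → a = b)
    -- all share the common least element `x⊥`
    (hbot : ∀ u ∈ U, xbot ∈ Xr u ∧ ∀ y ∈ Xr u, (y, xbot) ∈ u)
    -- pairwise compatibility: on `X(u₁) ∩ X(u₂)` the relations agree
    (hcompat : ∀ u₁ ∈ U, ∀ u₂ ∈ U, ∀ a b,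
      a ∈ Xr u₁ ∩ Xr u₂ → b ∈ Xr u₁ ∩ Xr u₂ → ((a, b) ∈ u₁ ↔ (a, b) ∈ u₂))
    -- every `u` is downward-closed in the union:
    -- `u = (⋃U)|_{X(u)}` and `X(u)` is a lower set of the union order
    (hrestr : ∀ u ∈ U, u = (⋃₀ U) ∩ (Xr u ×ˢ Xr u))
    (hlower : ∀ u ∈ U, ∀ a ∈ Xr u, ∀ b, (a, b) ∈ ⋃₀ U → b ∈ Xr u) :
    -- `⋃U` is a partial order on `X(⋃U)` with least element `x⊥`
    (∀ p ∈ ⋃₀ U, p.1 ∈ Xr (⋃₀ U) ∧ p.2 ∈ Xr (⋃₀ U)) ∧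
    (∀ a ∈ Xr (⋃₀ U), (a, a) ∈ ⋃₀ U) ∧
    (∀ a b c, (a, b) ∈ ⋃₀ U → (b, c) ∈ ⋃₀ U → (a, c) ∈ ⋃₀ U) ∧
    (∀ a b, (a, b) ∈ ⋃₀ U → (b, a) ∈ ⋃₀ U → a = b) ∧
    (∀ y ∈ Xr (⋃₀ U), (y, xbot) ∈ ⋃₀ U) := by
  refine ⟨?_, ?_, ?_, ?_, ?_⟩
  · rintro p ⟨u, hu, hp⟩
    obtain ⟨h1, h2⟩ := hdom u hu p hp
    exact ⟨⟨u, hu, h1⟩, ⟨u, hu, h2⟩⟩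
  · intro a ha; exact ha
  · rintro a b c ⟨u, hu, hab⟩ hbc
    have hb : b ∈ Xr u := (hdom u hu _ hab).2
    have hc : c ∈ Xr u := hlower u hu b hb c hbc
    have hbc' : (b, c) ∈ u := by
      rw [hrestr u hu]; exact ⟨hbc, hb, hc⟩
    exact ⟨u, hu, htrans u hu a b c hab hbc'⟩
  · rintro a b ⟨u, hu, hab⟩ hba
    have ha : a ∈ Xr u := (hdom u hu _ hab).1
    have hb : b ∈ Xr u := (hdom u hu _ hab).2
    have hba' : (b, a) ∈ u := by
      rw [hrestr u hu]; exact ⟨hba, hb, ha⟩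
    exact hantisymm u hu a b hab hba'
  · rintro y ⟨u, hu, hy⟩
    exact ⟨u, hu, (hbot u hu).2 y hy⟩
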